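/- Let x, y, a, b be complex numbers, let p > 1 and q be real numbers with 1/p + 1/q = 1, and let μ, ν, λ be nonzero real numbers with μ > 0, ν < 0 and λ < 0. If |λ|^{1/(p-1)} ≤ −|μ|^{1/(p-1)}·|a|^q + |ν|^{1/(p-1)}·|b|^q, then |x|^p/μ + |y|^p/ν ≥ |a·x + b·y|^p/λ. -/

import Mathlib

open Real

lemma bohr_aux_two_point (p : ℝ) (hp : 1 < p) {A B α β : ℝ} (hA : 0 ≤ A) (hB : 0 ≤ B)
    (hα : 0 ≤ α) (hβ : 0 < β) (h0 : α = 0 → A = 0) :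
    (A + B) ^ p ≤ (α + β) ^ (p - 1) * (A ^ p / α ^ (p - 1) + B ^ p / β ^ (p - 1)) := by
  have hp0 : (0:ℝ) < p := by linarith
  have hβp : (0:ℝ) < β ^ (p - 1) := Real.rpow_pos_of_pos hβ _
  rcases hα.eq_or_lt with hα0 | hαpos
  · have hA0 : A = 0 := h0 hα0.symm
    subst hA0
    rw [← hα0, Real.zero_rpow hp0.ne', zero_add, zero_add, zero_div, zero_add,
      mul_div_cancel₀ _ hβp.ne']
  · -- weighted Hölder on two points
    have key := Real.inner_le_weight_mul_Lp_of_nonneg (Finset.univ : Finset (Fin 2)) hp.le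
      ![α, β] ![A / α, B / β] (by intro i; fin_cases i <;> simp [hαpos.le, hβ.le])
      (by intro i; fin_cases i <;> simp [div_nonneg, hA, hB, hαpos.le, hβ.le])
    simp only [Fin.sum_univ_two, Matrix.cons_val_zero, Matrix.cons_val_one, Matrix.head_cons] at key
    rw [mul_div_cancel₀ _ hαpos.ne', mul_div_cancel₀ _ hβ.ne'] at key
    have hsum : 0 ≤ α * (A / α) ^ p + β * (B / β) ^ p := by positivity
    have hAB : 0 ≤ A + B := by positivity
    have step : (A + B) ^ p ≤ ((α + β) ^ (1 - p⁻¹) * (α * (A / α) ^ p + β * (B / β) ^ p) ^ p⁻¹) ^ p :=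
      Real.rpow_le_rpow hAB key hp0.le
    calc (A + B) ^ p ≤ _ := step
      _ = (α + β) ^ (p - 1) * (α * (A / α) ^ p + β * (B / β) ^ p) := by
          rw [Real.mul_rpow (by positivity) (by positivity), ← Real.rpow_mul (by positivity),
            ← Real.rpow_mul hsum]
          rw [inv_mul_cancel₀ hp0.ne', Real.rpow_one]
          congr 2
          field_simp
      _ = (α + β) ^ (p - 1) * (A ^ p / α ^ (p - 1) + B ^ p / β ^ (p - 1)) := by
          congr 1
          have e1 : α * (A / α) ^ p = A ^ p / α ^ (p - 1) := by
            rw [Real.div_rpow hA hαpos.le, Real.rpow_sub hαpos, Real.rpow_one]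
            have : (0:ℝ) < α ^ p := Real.rpow_pos_of_pos hαpos _
            field_simp
          have e2 : β * (B / β) ^ p = B ^ p / β ^ (p - 1) := by
            rw [Real.div_rpow hB hβ.le, Real.rpow_sub hβ, Real.rpow_one]
            have : (0:ℝ) < β ^ p := Real.rpow_pos_of_pos hβ _
            field_simp
          rw [e1, e2]

set_option maxHeartbeats 1000000 in
/-- Theorem 1 (iii): Euler–Lagrange / Bohr type inequality for complex numbers,
case μ > 0, ν < 0, λ < 0. -/
theorem bohr_type_complex_case_iii (x y a b : ℂ) (p q : ℝ) (hp : 1 < p)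
    (hpq : 1 / p + 1 / q = 1) (μ ν lam : ℝ) (hμ : 0 < μ) (hν : ν < 0) (hlam : lam < 0)
    (h : |lam| ^ (1 / (p - 1)) ≤
      -(|μ| ^ (1 / (p - 1)) * ‖a‖ ^ q) + |ν| ^ (1 / (p - 1)) * ‖b‖ ^ q) :
    ‖x‖ ^ p / μ + ‖y‖ ^ p / ν ≥ ‖a * x + b * y‖ ^ p / lam := by
  have hpq' : p.HolderConjugate q := Real.holderConjugate_iff.mpr ⟨hp, by simpa [one_div] using hpq⟩
  have hp1 : (0:ℝ) < p - 1 := by linarith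
  have hp0 : (0:ℝ) < p := by linarith
  have hq0 : (0:ℝ) < q := hpq'.symm.pos
  have hqp : q * (p - 1) = p := by rw [mul_comm]; exact hpq'.sub_one_mul_conj
  have hlam' : (0:ℝ) < -lam := by linarith
  have hν' : (0:ℝ) < -ν := by linarith
  rw [abs_of_pos hμ, abs_of_neg hν, abs_of_neg hlam] at h
  set u := ‖x‖ with hu
  set v := ‖y‖ with hv
  set w := ‖a * x + b * y‖ with hw
  set ca := ‖a‖ with hca
  set cb := ‖b‖ with hcb
  have hu0 : 0 ≤ u := norm_nonneg _
  have hv0 : 0 ≤ v := norm_nonneg _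
  have hw0 : 0 ≤ w := norm_nonneg _
  have hca0 : 0 ≤ ca := norm_nonneg _
  -- b ≠ 0
  have hb : b ≠ 0 := by
    rintro rfl
    have h1 : (0:ℝ) < (-lam) ^ (1 / (p - 1)) := Real.rpow_pos_of_pos hlam' _
    have h2 : (0:ℝ) ≤ μ ^ (1 / (p - 1)) * ca ^ q := by positivity
    simp only [hcb, norm_zero, Real.zero_rpow hq0.ne', mul_zero, add_zero] at h
    linarith
  have hcb0 : 0 < cb := by simpa [hcb] using norm_pos_iff.mpr hb
  -- key quantities
  set A := ca * u with hA
  set B := w with hB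
  set α := μ ^ (1 / (p - 1)) * ca ^ q with hα
  set β := (-lam) ^ (1 / (p - 1)) with hβ
  have hαnn : 0 ≤ α := by positivity
  have hβpos : 0 < β := Real.rpow_pos_of_pos hlam' _
  have h0 : α = 0 → A = 0 := by
    intro hz
    have hμp : (0:ℝ) < μ ^ (1 / (p - 1)) := Real.rpow_pos_of_pos hμ _
    have : ca ^ q = 0 := by
      by_contra hne
      have : 0 < ca ^ q := lt_of_le_of_ne (by positivity) (Ne.symm hne)
      nlinarith
    have : ca = 0 := by
      by_contra hne
      have hcap : 0 < ca := lt_of_le_of_ne hca0 (Ne.symm hne)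
      exact absurd this (Real.rpow_pos_of_pos hcap q).ne'
    simp [hA, this]
  have key := bohr_aux_two_point p hp (mul_nonneg hca0 hu0) hw0 hαnn hβpos h0
  -- triangle inequality: cb * v ≤ A + B
  have htri : cb * v ≤ A + B := by
    have : (b * y : ℂ) = (a * x + b * y) - a * x := by ring
    calc cb * v = ‖b * y‖ := by rw [norm_mul]
      _ = ‖(a * x + b * y) - a * x‖ := by rw [← this]
      _ ≤ w + ca * u := by
          refine (norm_sub_le _ _).trans ?_
          simp [hw, hca, hu, norm_mul, le_refl]
          exact le_rfl
      _ = A + B := by ring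
  have htri' : (cb * v) ^ p ≤ (A + B) ^ p :=
    Real.rpow_le_rpow (by positivity) htri hp0.le
  -- bound on the weight sum using h
  have hweight : (α + β) ^ (p - 1) ≤ (-ν) * cb ^ p := by
    have hle : α + β ≤ (-ν) ^ (1 / (p - 1)) * cb ^ q := by
      rw [hα, hβ]; linarith
    calc (α + β) ^ (p - 1) ≤ ((-ν) ^ (1 / (p - 1)) * cb ^ q) ^ (p - 1) :=
          Real.rpow_le_rpow (by positivity) hle hp1.le
      _ = (-ν) * cb ^ p := by
          rw [Real.mul_rpow (by positivity) (by positivity),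
            ← Real.rpow_mul hν'.le, ← Real.rpow_mul hcb0.le,
            one_div, inv_mul_cancel₀ hp1.ne', Real.rpow_one, hqp]
  -- term computations
  have hβterm : B ^ p / β ^ (p - 1) = w ^ p / (-lam) := by
    rw [hβ, ← Real.rpow_mul hlam'.le, one_div, inv_mul_cancel₀ hp1.ne', Real.rpow_one]
  have hαterm : A ^ p / α ^ (p - 1) ≤ u ^ p / μ := by
    rcases hca0.eq_or_lt with hz | hcap
    · have : A = 0 := by simp [hA, ← hz]
      rw [this, Real.zero_rpow hp0.ne', zero_div]
      positivity
    · have : α ^ (p - 1) = μ * ca ^ p := by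
        rw [hα, Real.mul_rpow (by positivity) (by positivity),
          ← Real.rpow_mul hμ.le, ← Real.rpow_mul hcap.le,
          one_div, inv_mul_cancel₀ hp1.ne', Real.rpow_one, hqp]
      have hcapp : (0:ℝ) < ca ^ p := Real.rpow_pos_of_pos hcap _
      rw [this, hA, Real.mul_rpow hcap.le hu0]
      rw [show ca ^ p * u ^ p / (μ * ca ^ p) = u ^ p / μ by field_simp]
  -- sum nonneg facts for multiplying inequalities
  have hterms : 0 ≤ A ^ p / α ^ (p - 1) + B ^ p / β ^ (p - 1) := by positivity
  have hchain : (cb * v) ^ p ≤ (-ν) * cb ^ p * (u ^ p / μ + w ^ p / (-lam)) := by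
    calc (cb * v) ^ p ≤ (α + β) ^ (p - 1) * (A ^ p / α ^ (p - 1) + B ^ p / β ^ (p - 1)) :=
          htri'.trans key
      _ ≤ ((-ν) * cb ^ p) * (A ^ p / α ^ (p - 1) + B ^ p / β ^ (p - 1)) :=
          mul_le_mul_of_nonneg_right hweight hterms
      _ ≤ ((-ν) * cb ^ p) * (u ^ p / μ + w ^ p / (-lam)) := by
          refine mul_le_mul_of_nonneg_left ?_ (by positivity)
          rw [hβterm]
          exact add_le_add hαterm le_rfl
  have hcbp : (0:ℝ) < cb ^ p := Real.rpow_pos_of_pos hcb0 _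
  have hfin : v ^ p / (-ν) ≤ u ^ p / μ + w ^ p / (-lam) := by
    rw [Real.mul_rpow hcb0.le hv0] at hchain
    rw [div_le_iff₀ hν']
    nlinarith [Real.rpow_nonneg hv0 p]
  have e1 : v ^ p / ν = -(v ^ p / (-ν)) := by field_simp
  have e2 : w ^ p / lam = -(w ^ p / (-lam)) := by field_simp
  rw [ge_iff_le, e1, e2]
  linarith
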